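/- For every permutation π of {1,2,…,n}, the transposition distance of π satisfies td(π) ≥ (n + 1 − c_odd(overline(π))) / 2, where c_odd(overline(π)) is the number of odd-length cycles (including fixed points) of the permutation overline(π) of {0,1,…,n}. -/

import Mathlib

/-- The (n+1)-cycle (0,1,2,…,n) on {0,1,…,n} = `Fin (n+1)`, mapping x to x+1 (mod n+1). -/
def rho (n : ℕ) : Equiv.Perm (Fin (n + 1)) :=
  finRotate (n + 1)

/-- For a permutation `π` of {0,1,…,n} fixing 0 (the extension of a permutation of {1,…,n}),
`ob n π` is `overline(π) = ρ ∘ β_π`, where `β_π = π ∘ ρ⁻¹ ∘ π⁻¹` is precisely the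
(n+1)-cycle (0, π_n, π_{n−1}, …, π_1): it sends 0 ↦ π_n, π_i ↦ π_{i−1} (2 ≤ i ≤ n),
and π_1 ↦ 0. -/
def ob (n : ℕ) (π : Equiv.Perm (Fin (n + 1))) : Equiv.Perm (Fin (n + 1)) :=
  rho n * (π * (rho n)⁻¹ * π⁻¹)

/-- `IsGRTransposition n i j l τ` says that `τ` (a permutation of {0,1,…,n} fixing 0,
representing a permutation of {1,…,n}) is the (genome-rearrangement) transposition
τ(i,j,l) with 1 ≤ i < j < l ≤ n+1, i.e. its one-line notation on positions 1,…,n is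
⟨1,…,i−1, j,…,l−1, i,…,j−1, l,…,n⟩. -/
def IsGRTransposition (n i j l : ℕ) (τ : Equiv.Perm (Fin (n + 1))) : Prop :=
  1 ≤ i ∧ i < j ∧ j < l ∧ l ≤ n + 1 ∧
  (∀ p : Fin (n + 1), (p : ℕ) < i → τ p = p) ∧
  (∀ p : Fin (n + 1), i ≤ (p : ℕ) → (p : ℕ) < i + (l - j) →
      (τ p : ℕ) = j + ((p : ℕ) - i)) ∧
  (∀ p : Fin (n + 1), i + (l - j) ≤ (p : ℕ) → (p : ℕ) < l →
      (τ p : ℕ) = i + ((p : ℕ) - (i + (l - j)))) ∧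
  (∀ p : Fin (n + 1), l ≤ (p : ℕ) → τ p = p)

/-- The number of fixed points c₁(σ) of a permutation σ. -/
def fixedPointCount {m : ℕ} (σ : Equiv.Perm (Fin m)) : ℕ :=
  (Finset.univ.filter fun x => σ x = x).card

/-- The number of cycles c(σ) of a permutation σ, counting fixed points as 1-cycles
(`Equiv.Perm.cycleType` lists the lengths of the cycles of length ≥ 2). -/
def cycleCount {m : ℕ} (σ : Equiv.Perm (Fin m)) : ℕ :=
  σ.cycleType.card + fixedPointCount σ

/-- The number of odd-length cycles c_odd(σ) of a permutation σ, counting fixed points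
as (odd) 1-cycles. -/
def oddCycleCount {m : ℕ} (σ : Equiv.Perm (Fin m)) : ℕ :=
  (σ.cycleType.filter fun k => Odd k).card + fixedPointCount σ

/-- `τ` is a transposition τ(i,j,l) for some 1 ≤ i < j < l ≤ n+1. -/
def IsGRTranspositionPerm (n : ℕ) (τ : Equiv.Perm (Fin (n + 1))) : Prop :=
  ∃ i j l : ℕ, IsGRTransposition n i j l τ

/-- The transposition distance: the least t such that π is a product of t
transpositions τ(i,j,l). -/
noncomputable def td (n : ℕ) (π : Equiv.Perm (Fin (n + 1))) : ℕ :=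
  sInf {t | ∃ L : List (Equiv.Perm (Fin (n + 1))), L.length = t ∧
    (∀ g ∈ L, IsGRTranspositionPerm n g) ∧ L.prod = π}

set_option linter.unusedSectionVars false
open Equiv Equiv.Perm Finset
section Generic
variable {α : Type*} [Fintype α] [DecidableEq α]

/-- orbit length of x under σ -/
noncomputable def per (σ : Equiv.Perm α) (x : α) : ℕ := Function.minimalPeriod σ x

lemma mem_periodicPts (σ : Equiv.Perm α) (x : α) : x ∈ Function.periodicPts σ :=
  ⟨orderOf σ, orderOf_pos σ, by
    rw [Function.IsPeriodicPt, Function.IsFixedPt, ← Equiv.Perm.coe_pow, pow_orderOf_eq_one]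
    rfl⟩

lemma per_pos (σ : Equiv.Perm α) (x : α) : 0 < per σ x := by
  rw [per, Function.minimalPeriod_pos_iff_mem_periodicPts]
  exact mem_periodicPts σ x

lemma pow_per_apply (σ : Equiv.Perm α) (x : α) : (σ ^ per σ x) x = x := by
  rw [Equiv.Perm.coe_pow]; exact Function.iterate_minimalPeriod

lemma per_dvd_of_pow_apply (σ : Equiv.Perm α) {x : α} {k : ℕ} (h : (σ ^ k) x = x) :
    per σ x ∣ k := by
  apply Function.IsPeriodicPt.minimalPeriod_dvd
  rwa [Function.IsPeriodicPt, Function.IsFixedPt, ← Equiv.Perm.coe_pow]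

lemma pow_apply_eq_self_iff_per_dvd (σ : Equiv.Perm α) (x : α) (k : ℕ) :
    (σ ^ k) x = x ↔ per σ x ∣ k := by
  constructor
  · exact per_dvd_of_pow_apply σ
  · rintro ⟨c, rfl⟩
    rw [pow_mul]
    induction c with
    | zero => simp
    | succ c ih => rw [pow_succ, Equiv.Perm.mul_apply, pow_per_apply]; exact ih

lemma per_eq_one_iff (σ : Equiv.Perm α) (x : α) : per σ x = 1 ↔ σ x = x :=
  Function.minimalPeriod_eq_one_iff_isFixedPt

lemma per_apply (σ : Equiv.Perm α) (x : α) : per σ (σ x) = per σ x :=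
  Function.minimalPeriod_apply (mem_periodicPts σ x)

lemma per_pow_apply (σ : Equiv.Perm α) (x : α) (k : ℕ) : per σ ((σ ^ k) x) = per σ x := by
  induction k with
  | zero => simp
  | succ k ih => rw [pow_succ', Equiv.Perm.mul_apply, per_apply]; exact ih

lemma pow_mod_per_apply (σ : Equiv.Perm α) (x : α) (k : ℕ) :
    (σ ^ (k % per σ x)) x = (σ ^ k) x := by
  conv_rhs => rw [← Nat.mod_add_div k (per σ x), pow_add, Equiv.Perm.mul_apply]
  congr 1
  exact ((pow_apply_eq_self_iff_per_dvd σ x _).2 ⟨_, rfl⟩).symm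

/-- the orbit of x under σ, as a Finset -/
noncomputable def orb (σ : Equiv.Perm α) (x : α) : Finset α :=
  (Finset.range (per σ x)).image (fun k => (σ ^ k) x)

lemma mem_orb_self (σ : Equiv.Perm α) (x : α) : x ∈ orb σ x := by
  rw [orb, Finset.mem_image]
  exact ⟨0, Finset.mem_range.2 (per_pos σ x), by simp⟩

lemma mem_orb_iff {σ : Equiv.Perm α} {x y : α} : y ∈ orb σ x ↔ ∃ k : ℕ, (σ ^ k) x = y := by
  rw [orb, Finset.mem_image]
  constructor
  · rintro ⟨k, _, rfl⟩; exact ⟨k, rfl⟩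
  · rintro ⟨k, rfl⟩
    exact ⟨k % per σ x, Finset.mem_range.2 (Nat.mod_lt _ (per_pos σ x)),
      pow_mod_per_apply σ x k⟩

lemma per_eq_of_mem_orb {σ : Equiv.Perm α} {x y : α} (h : y ∈ orb σ x) :
    per σ y = per σ x := by
  obtain ⟨k, rfl⟩ := mem_orb_iff.1 h
  exact per_pow_apply σ x k

lemma mem_orb_symm {σ : Equiv.Perm α} {x y : α} (h : y ∈ orb σ x) : x ∈ orb σ y := by
  obtain ⟨k, rfl⟩ := mem_orb_iff.1 h
  rcases Nat.eq_zero_or_pos (k % per σ x) with h0 | h0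
  · rw [← pow_mod_per_apply, h0, pow_zero]; exact mem_orb_self σ _
  · rw [mem_orb_iff]
    refine ⟨per σ x - k % per σ x, ?_⟩
    rw [← pow_mod_per_apply σ x k, ← Equiv.Perm.mul_apply, ← pow_add]
    rw [Nat.sub_add_cancel (le_of_lt (Nat.mod_lt _ (per_pos σ x)))]
    exact pow_per_apply σ x

lemma orb_eq_of_mem {σ : Equiv.Perm α} {x y : α} (h : y ∈ orb σ x) : orb σ y = orb σ x := by
  ext z
  simp only [mem_orb_iff] at *
  obtain ⟨k, rfl⟩ := h
  constructor
  · rintro ⟨j, rfl⟩; exact ⟨j + k, by rw [pow_add, Equiv.Perm.mul_apply]⟩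
  · rintro ⟨j, rfl⟩
    obtain ⟨i, hi⟩ := mem_orb_iff.1 (mem_orb_symm (mem_orb_iff.2 ⟨k, rfl⟩ : (σ^k) x ∈ orb σ x))
    exact ⟨j + i, by rw [pow_add, Equiv.Perm.mul_apply, hi]⟩

lemma card_orb (σ : Equiv.Perm α) (x : α) : (orb σ x).card = per σ x := by
  rw [orb, Finset.card_image_of_injOn, Finset.card_range]
  have key : ∀ i j : ℕ, i < j → j < per σ x → (σ ^ i) x = (σ ^ j) x → False := by
    intro i j hlt hj hij
    have h2 : (σ ^ (j - i)) ((σ ^ i) x) = (σ ^ i) x := by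
      rw [← Equiv.Perm.mul_apply, ← pow_add, Nat.sub_add_cancel (le_of_lt hlt), hij]
    have hdvd := per_dvd_of_pow_apply σ h2
    rw [per_pow_apply] at hdvd
    have := Nat.le_of_dvd (by omega) hdvd
    omega
  intro i hi j hj hij
  simp only [Finset.coe_range, Set.mem_Iio] at hi hj
  have hij' : (σ ^ i) x = (σ ^ j) x := hij
  rcases lt_trichotomy i j with h | h | h
  · exact absurd (key i j h hj hij') (by simp)
  · exact h
  · exact absurd (key j i h hi hij'.symm) (by simp)
/-- weight of a point: 1/ℓ if its orbit length ℓ is odd, else 0 -/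
noncomputable def wt (σ : Equiv.Perm α) (x : α) : ℚ :=
  if Odd (per σ x) then ((per σ x : ℚ))⁻¹ else 0

/-- parity indicator -/
def ch (t : ℕ) : ℚ := if Odd t then 1 else 0

lemma wt_eq_one_of_fixed {σ : Equiv.Perm α} {x : α} (h : σ x = x) : wt σ x = 1 := by
  have : per σ x = 1 := (per_eq_one_iff σ x).2 h
  simp [wt, this]

/-- generic odd cycle count (matches `oddCycleCount` on `Fin m`) -/
noncomputable def oddC (σ : Equiv.Perm α) : ℕ :=
  (σ.cycleType.filter fun k => Odd k).card + (Finset.univ.filter fun x => σ x = x).card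

lemma fixed_filter_eq_compl (σ : Equiv.Perm α) :
    (Finset.univ.filter fun x => σ x = x) = σ.supportᶜ := by
  ext x; simp [Equiv.Perm.mem_support]

lemma per_eq_of_forall_pow_eq {σ' σ : Equiv.Perm α} {x : α}
    (h : ∀ k : ℕ, (σ' ^ k) x = (σ ^ k) x) : per σ' x = per σ x := by
  apply Nat.dvd_antisymm
  · exact per_dvd_of_pow_apply σ' (by rw [h]; exact pow_per_apply σ x)
  · exact per_dvd_of_pow_apply σ (by rw [← h]; exact pow_per_apply σ' x)

lemma orb_eq_support_of_isCycle {σ : Equiv.Perm α} (hc : σ.IsCycle) {x : α}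
    (hx : σ x ≠ x) : orb σ x = σ.support := by
  apply Finset.Subset.antisymm
  · intro y hy
    have h1 : per σ y = per σ x := per_eq_of_mem_orb hy
    have h2 : per σ x ≠ 1 := fun h => hx ((per_eq_one_iff σ x).1 h)
    rw [Equiv.Perm.mem_support]
    intro hfix
    exact h2 (by rw [← h1]; exact (per_eq_one_iff σ y).2 hfix)
  · intro y hy
    rw [Equiv.Perm.mem_support] at hy
    obtain ⟨i, hi⟩ := hc.exists_zpow_eq hx hy
    obtain ⟨k, _, _, hk⟩ := Equiv.Perm.SameCycle.exists_pow_eq σ ⟨i, hi⟩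
    exact mem_orb_iff.2 ⟨k, hk⟩

lemma per_eq_card_support_of_isCycle {σ : Equiv.Perm α} (hc : σ.IsCycle) {x : α}
    (hx : σ x ≠ x) : per σ x = σ.support.card := by
  rw [← card_orb, orb_eq_support_of_isCycle hc hx]

lemma sum_wt_eq_oddC (σ : Equiv.Perm α) : ∑ x, wt σ x = (oddC σ : ℚ) := by
  induction σ using Equiv.Perm.cycle_induction_on with
  | base_one =>
    have h1 : ∀ x : α, wt (1 : Equiv.Perm α) x = 1 := fun x => wt_eq_one_of_fixed rfl
    simp only [h1, Finset.sum_const, Finset.card_univ, nsmul_eq_mul, mul_one]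
    simp [oddC, Equiv.Perm.cycleType_one]
  | base_cycles σ hc =>
    have hsupp : ∀ x ∈ σ.support, wt σ x = if Odd σ.support.card then ((σ.support.card : ℚ))⁻¹ else 0 := by
      intro x hx
      rw [Equiv.Perm.mem_support] at hx
      rw [wt, per_eq_card_support_of_isCycle hc hx]
    have hcompl : ∀ x ∈ σ.supportᶜ, wt σ x = 1 := by
      intro x hx
      rw [Finset.mem_compl, Equiv.Perm.mem_support, not_not] at hx
      exact wt_eq_one_of_fixed hx
    rw [← Finset.sum_compl_add_sum σ.support]
    rw [Finset.sum_congr rfl hcompl, Finset.sum_congr rfl hsupp]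
    have hcard2 : 2 ≤ σ.support.card := hc.two_le_card_support
    have hne : (σ.support.card : ℚ) ≠ 0 := by positivity
    simp only [Finset.sum_const, Finset.card_compl, nsmul_eq_mul, mul_one]
    rw [oddC, hc.cycleType, fixed_filter_eq_compl, Finset.card_compl]
    have hfil : (Multiset.filter (fun k => Odd k) ({σ.support.card} : Multiset ℕ)).card
        = if Odd σ.support.card then 1 else 0 := by
      by_cases h : Odd σ.support.card <;> simp [Multiset.filter_singleton, h]
    rw [hfil]
    have hle : σ.support.card ≤ Fintype.card α := Finset.card_le_univ _
    by_cases h : Odd σ.support.card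
    · simp only [h, if_true, smul_eq_mul]
      rw [mul_inv_cancel₀ hne]
      push_cast [Nat.cast_sub hle]
      ring
    · simp only [h, if_false, smul_eq_mul, mul_zero]
      push_cast [Nat.cast_sub hle]
      ring
  | induction_disjoint f g hdisj hf ihf ihg =>
    have hwt : ∀ x : α, wt (f * g) x = wt f x + wt g x - 1 := by
      intro x
      rcases hdisj x with hfx | hgx
      · -- f x = x
        by_cases hgx : g x = x
        · have h1 : (f * g) x = x := by rw [Equiv.Perm.mul_apply, hgx, hfx]
          rw [wt_eq_one_of_fixed h1, wt_eq_one_of_fixed hfx, wt_eq_one_of_fixed hgx]; ring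
        · have hkey : ∀ k : ℕ, ((f * g) ^ k) x = (g ^ k) x := by
            intro k
            rw [(hdisj.commute).mul_pow, Equiv.Perm.mul_apply]
            have hmem : (g ^ k) x ∈ g.support ∨ (g ^ k) x = x := by
              by_cases h : (g ^ k) x = x
              · right; exact h
              · left; rw [Equiv.Perm.mem_support]
                intro hfix
                have h1 : per g ((g ^ k) x) = 1 := (per_eq_one_iff g _).2 hfix
                rw [per_pow_apply] at h1
                exact hgx ((per_eq_one_iff g x).1 h1)
            have hffix : f ((g ^ k) x) = (g ^ k) x := by
              rcases hmem with h | h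
              · rcases hdisj ((g ^ k) x) with h' | h'
                · exact h'
                · exact absurd h' (Equiv.Perm.mem_support.1 h)
              · rw [h]; exact hfx
            have : per f ((g ^ k) x) = 1 := (per_eq_one_iff f _).2 hffix
            rw [(pow_apply_eq_self_iff_per_dvd f _ k).2 (by rw [this]; exact one_dvd k)]
          have hper : per (f * g) x = per g x := per_eq_of_forall_pow_eq hkey
          rw [wt, hper, wt_eq_one_of_fixed hfx, ← wt]; ring
      · -- g x = x
        have hkey : ∀ k : ℕ, ((f * g) ^ k) x = (f ^ k) x := by
          intro k
          rw [(hdisj.commute).mul_pow, Equiv.Perm.mul_apply]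
          congr 1
          have : per g x = 1 := (per_eq_one_iff g x).2 hgx
          exact (pow_apply_eq_self_iff_per_dvd g x k).2 (by rw [this]; exact one_dvd k)
        have hper : per (f * g) x = per f x := per_eq_of_forall_pow_eq hkey
        rw [wt, hper, wt_eq_one_of_fixed hgx, ← wt]; ring
    have hsub : (f * g).support.card = f.support.card + g.support.card := by
      rw [hdisj.support_mul, Finset.card_union_of_disjoint hdisj.disjoint_support]
    have h1 : f.support.card + g.support.card ≤ Fintype.card α := by
      rw [← hsub]; exact Finset.card_le_univ _
    have hN : oddC (f * g) + Fintype.card α = oddC f + oddC g := by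
      rw [oddC, oddC, oddC, hdisj.cycleType_mul, Multiset.filter_add, Multiset.card_add,
        fixed_filter_eq_compl, fixed_filter_eq_compl, fixed_filter_eq_compl,
        Finset.card_compl, Finset.card_compl, Finset.card_compl, hsub]
      omega
    have h2 : ((oddC (f * g) : ℚ)) + (Fintype.card α : ℚ) = (oddC f : ℚ) + (oddC g : ℚ) := by
      exact_mod_cast congrArg (fun t : ℕ => (t : ℚ)) hN
    rw [Finset.sum_congr rfl (fun x _ => hwt x)]
    rw [Finset.sum_sub_distrib, Finset.sum_add_distrib, ihf, ihg]
    simp only [Finset.sum_const, Finset.card_univ, nsmul_eq_mul, mul_one]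
    linarith
lemma pow_apply_inj (σ : Equiv.Perm α) (x : α) {i j : ℕ} (hi : i < per σ x)
    (hj : j < per σ x) (h : (σ ^ i) x = (σ ^ j) x) : i = j := by
  have key : ∀ a b : ℕ, a < b → b < per σ x → (σ ^ a) x = (σ ^ b) x → False := by
    intro a b hlt hb hab
    have h2 : (σ ^ (b - a)) ((σ ^ a) x) = (σ ^ a) x := by
      rw [← Equiv.Perm.mul_apply, ← pow_add, Nat.sub_add_cancel (le_of_lt hlt), hab]
    have hdvd := per_dvd_of_pow_apply σ h2
    rw [per_pow_apply] at hdvd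
    have := Nat.le_of_dvd (by omega) hdvd
    omega
  rcases lt_trichotomy i j with hl | hl | hl
  · exact absurd (key i j hl hj h) (by simp)
  · exact hl
  · exact absurd (key j i hl hi h.symm) (by simp)

lemma pow_swap_mul_of_notmem (σ : Equiv.Perm α) {u v x : α} (hu : x ∉ orb σ u)
    (hv : x ∉ orb σ v) : ∀ k : ℕ, ((Equiv.swap u v * σ) ^ k) x = (σ ^ k) x := by
  intro k
  induction k with
  | zero => rfl
  | succ k ih =>
    rw [pow_succ', Equiv.Perm.mul_apply, ih, Equiv.Perm.mul_apply, ← Equiv.Perm.mul_apply σ,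
      ← pow_succ']
    apply Equiv.swap_apply_of_ne_of_ne
    · intro h
      exact hu (mem_orb_symm (mem_orb_iff.2 ⟨k + 1, h⟩))
    · intro h
      exact hv (mem_orb_symm (mem_orb_iff.2 ⟨k + 1, h⟩))

lemma wt_swap_mul_of_notmem (σ : Equiv.Perm α) {u v x : α} (hu : x ∉ orb σ u)
    (hv : x ∉ orb σ v) : wt (Equiv.swap u v * σ) x = wt σ x := by
  rw [wt, wt, per_eq_of_forall_pow_eq (pow_swap_mul_of_notmem σ hu hv)]

lemma sum_wt_orb (σ : Equiv.Perm α) (u : α) :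
    ∑ y ∈ orb σ u, wt σ y = ch (per σ u) := by
  have hconst : ∀ y ∈ orb σ u, wt σ y = wt σ u := by
    intro y hy; rw [wt, wt, per_eq_of_mem_orb hy]
  rw [Finset.sum_congr rfl hconst, Finset.sum_const, card_orb]
  have hp : (0:ℕ) < per σ u := per_pos σ u
  rw [wt, ch]
  by_cases h : Odd (per σ u)
  · simp only [h, if_true, nsmul_eq_mul]
    rw [mul_inv_cancel₀ (by exact_mod_cast hp.ne')]
  · simp [h]

section Merge
variable {σ : Equiv.Perm α} {u v : α}

lemma merge_pow_u (huv : u ≠ v) (hm : v ∉ orb σ u) :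
    ∀ k ≤ per σ u, ((Equiv.swap u v * σ) ^ k) u = if k = per σ u then v else (σ ^ k) u := by
  intro k hk
  induction k with
  | zero =>
    rw [if_neg (by have := per_pos σ u; omega)]; rfl
  | succ k ih =>
    have hklt : k < per σ u := by omega
    rw [pow_succ', Equiv.Perm.mul_apply, ih (by omega), if_neg hklt.ne,
      Equiv.Perm.mul_apply, ← Equiv.Perm.mul_apply σ, ← pow_succ']
    by_cases hstop : k + 1 = per σ u
    · rw [if_pos hstop, hstop, pow_per_apply, Equiv.swap_apply_left]
    · rw [if_neg hstop]
      apply Equiv.swap_apply_of_ne_of_ne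
      · intro h
        have := per_dvd_of_pow_apply σ h
        have := Nat.le_of_dvd (by omega) this
        omega
      · intro h
        exact hm (mem_orb_iff.2 ⟨k + 1, h⟩)
end Merge
section Merge2
variable {σ : Equiv.Perm α} {u v : α}

lemma notmem_orb_symm' (h : v ∉ orb σ u) : u ∉ orb σ v := fun h' => h (mem_orb_symm h')

lemma orb_disjoint_of_notmem (h : v ∉ orb σ u) : _root_.Disjoint (orb σ u) (orb σ v) := by
  rw [Finset.disjoint_left]
  intro z hzu hzv
  exact h (by rw [← orb_eq_of_mem hzu, orb_eq_of_mem hzv]; exact mem_orb_self σ v)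

lemma per_swap_merge_u (huv : u ≠ v) (hm : v ∉ orb σ u) :
    per (Equiv.swap u v * σ) u = per σ u + per σ v := by
  set σ' := Equiv.swap u v * σ with hσ'
  have hm' : u ∉ orb σ v := notmem_orb_symm' hm
  have hp := per_pos σ u
  have hq := per_pos σ v
  have hvu : ∀ k ≤ per σ v, (σ' ^ k) v = if k = per σ v then u else (σ ^ k) v := by
    rw [hσ', Equiv.swap_comm]
    exact merge_pow_u huv.symm hm'
  have hret : (σ' ^ (per σ u + per σ v)) u = u := by
    rw [add_comm, pow_add, Equiv.Perm.mul_apply,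
      merge_pow_u huv hm _ le_rfl, if_pos rfl, hvu _ le_rfl, if_pos rfl]
  have hdvd := per_dvd_of_pow_apply σ' hret
  have hle := Nat.le_of_dvd (by omega) hdvd
  rcases lt_trichotomy (per σ' u) (per σ u + per σ v) with hlt | heq | hgt
  · exfalso
    have hr := pow_per_apply σ' u
    rcases le_or_gt (per σ' u) (per σ u) with h1 | h1
    · rcases eq_or_lt_of_le h1 with h2 | h2
      · rw [merge_pow_u huv hm _ h1, if_pos h2] at hr
        exact huv hr.symm
      · rw [merge_pow_u huv hm _ h1, if_neg h2.ne] at hr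
        have := per_dvd_of_pow_apply σ hr
        have := Nat.le_of_dvd (per_pos σ' u) this
        omega
    · have hsplit : (σ' ^ per σ' u) u = (σ' ^ (per σ' u - per σ u)) v := by
        conv_lhs => rw [← Nat.sub_add_cancel (le_of_lt h1), pow_add, Equiv.Perm.mul_apply,
          merge_pow_u huv hm _ le_rfl, if_pos rfl]
      rw [hsplit, hvu _ (by omega), if_neg (by omega)] at hr
      exact hm' (mem_orb_iff.2 ⟨_, hr⟩)
  · exact heq
  · omega

lemma per_swap_merge_orbit (huv : u ≠ v) (hm : v ∉ orb σ u) :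
    ∀ y ∈ orb σ u ∪ orb σ v, per (Equiv.swap u v * σ) y = per σ u + per σ v := by
  set σ' := Equiv.swap u v * σ with hσ'
  have hm' : u ∉ orb σ v := notmem_orb_symm' hm
  intro y hy
  rcases Finset.mem_union.1 hy with hy | hy
  · obtain ⟨k, rfl⟩ := mem_orb_iff.1 hy
    rw [← pow_mod_per_apply]
    have hk : k % per σ u < per σ u := Nat.mod_lt _ (per_pos σ u)
    have heq : (σ ^ (k % per σ u)) u = (σ' ^ (k % per σ u)) u := by
      rw [merge_pow_u huv hm _ (le_of_lt hk), if_neg hk.ne]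
    rw [heq, per_pow_apply, per_swap_merge_u huv hm]
  · obtain ⟨k, rfl⟩ := mem_orb_iff.1 hy
    rw [← pow_mod_per_apply]
    have hk : k % per σ v < per σ v := Nat.mod_lt _ (per_pos σ v)
    have hvu : ∀ j ≤ per σ v, (σ' ^ j) v = if j = per σ v then u else (σ ^ j) v := by
      rw [hσ', Equiv.swap_comm]
      exact merge_pow_u huv.symm hm'
    have heq : (σ ^ (k % per σ v)) v = (σ' ^ (k % per σ v)) v := by
      rw [hvu _ (le_of_lt hk), if_neg hk.ne]
    rw [heq, per_pow_apply]
    have hpv : per σ' v = per σ v + per σ u := by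
      rw [hσ', Equiv.swap_comm]
      exact per_swap_merge_u huv.symm hm'
    rw [hpv]; ring

lemma sum_wt_swap_merge (huv : u ≠ v) (hm : v ∉ orb σ u) :
    ∑ x, wt (Equiv.swap u v * σ) x
      = ∑ x, wt σ x + ch (per σ u + per σ v) - ch (per σ u) - ch (per σ v) := by
  set σ' := Equiv.swap u v * σ with hσ'
  set C : Finset α := orb σ u ∪ orb σ v with hC
  have hdisjC := orb_disjoint_of_notmem hm
  have hCcard : C.card = per σ u + per σ v := by
    rw [hC, Finset.card_union_of_disjoint hdisjC, card_orb, card_orb]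
  have hrest : ∀ x ∈ Cᶜ, wt σ' x = wt σ x := by
    intro x hx
    rw [Finset.mem_compl, hC, Finset.mem_union] at hx
    push_neg at hx
    exact wt_swap_mul_of_notmem σ hx.1 hx.2
  have honC : ∀ x ∈ C, wt σ' x
      = if Odd (per σ u + per σ v) then ((per σ u + per σ v : ℕ) : ℚ)⁻¹ else 0 := by
    intro x hx
    rw [wt, per_swap_merge_orbit huv hm x hx]
  have hsum' : ∑ x ∈ C, wt σ' x = ch (per σ u + per σ v) := by
    rw [Finset.sum_congr rfl honC, Finset.sum_const, hCcard, ch]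
    have hp : (0:ℕ) < per σ u + per σ v := by have := per_pos σ u; omega
    by_cases h : Odd (per σ u + per σ v)
    · simp only [h, if_true, nsmul_eq_mul]
      rw [mul_inv_cancel₀ (by exact_mod_cast hp.ne')]
    · simp [h]
  have hsum : ∑ x ∈ C, wt σ x = ch (per σ u) + ch (per σ v) := by
    rw [hC, Finset.sum_union hdisjC, sum_wt_orb, sum_wt_orb]
  calc ∑ x, wt σ' x = ∑ x ∈ Cᶜ, wt σ' x + ∑ x ∈ C, wt σ' x :=
        (Finset.sum_compl_add_sum C _).symm
    _ = ∑ x ∈ Cᶜ, wt σ x + ch (per σ u + per σ v) := by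
        rw [Finset.sum_congr rfl hrest, hsum']
    _ = (∑ x ∈ Cᶜ, wt σ x + ∑ x ∈ C, wt σ x) + ch (per σ u + per σ v)
        - ch (per σ u) - ch (per σ v) := by rw [hsum]; ring
    _ = ∑ x, wt σ x + ch (per σ u + per σ v) - ch (per σ u) - ch (per σ v) := by
        rw [Finset.sum_compl_add_sum C]
end Merge2
section Split
variable {σ : Equiv.Perm α} {u v : α}

lemma ch_nonneg (t : ℕ) : 0 ≤ ch t := by rw [ch]; split <;> norm_num

lemma ch_le_one (t : ℕ) : ch t ≤ 1 := by rw [ch]; split <;> norm_num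

lemma ch_add_le (a b : ℕ) : ch (a + b) ≤ ch a + ch b := by
  rcases Nat.even_or_odd a with ha | ha <;> rcases Nat.even_or_odd b with hb | hb
  · have h : ¬ Odd (a + b) := by simp [Nat.not_odd_iff_even]; exact ha.add hb
    have h1 : ¬ Odd a := by simpa [Nat.not_odd_iff_even] using ha
    have h2 : ¬ Odd b := by simpa [Nat.not_odd_iff_even] using hb
    simp [ch, h, h1, h2]
  · have h : Odd (a + b) := ha.add_odd hb
    have h1 : ¬ Odd a := by simpa [Nat.not_odd_iff_even] using ha
    simp [ch, h, h1, hb]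
  · have h : Odd (a + b) := ha.add_even hb
    have h2 : ¬ Odd b := by simpa [Nat.not_odd_iff_even] using hb
    simp [ch, h, h2, ha]
  · have h : ¬ Odd (a + b) := by simp [Nat.not_odd_iff_even]; exact ha.add_odd hb
    simp only [ch, if_neg h, if_pos ha, if_pos hb]
    norm_num

lemma ch_add_even {a b : ℕ} (hb : Even b) : ch (a + b) = ch a := by
  rcases Nat.even_or_odd a with ha | ha
  · have h : ¬ Odd (a + b) := by simp [Nat.not_odd_iff_even]; exact ha.add hb
    have h1 : ¬ Odd a := by simpa [Nat.not_odd_iff_even] using ha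
    simp [ch, h, h1]
  · have h : Odd (a + b) := ha.add_even hb
    simp [ch, h, ha]

lemma sum_wt_swap_split (huv : u ≠ v) (hs : v ∈ orb σ u) :
    ∑ x, wt σ x ≤ ∑ x, wt (Equiv.swap u v * σ) x := by
  set σ' := Equiv.swap u v * σ with hσ'
  have hppos := per_pos σ u
  set p := per σ u with hp
  -- find d with σ^d u = v, 0 < d < p
  obtain ⟨k, hk⟩ := mem_orb_iff.1 hs
  have hd1 : (σ ^ (k % p)) u = v := by rw [hp, pow_mod_per_apply]; exact hk
  set d := k % p with hdd
  have hdlt : d < p := Nat.mod_lt _ hppos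
  have hdpos : 0 < d := by
    rcases Nat.eq_zero_or_pos d with h | h
    · exfalso; rw [h, pow_zero] at hd1; exact huv hd1
    · exact h
  -- iterates of u
  have S1 : ∀ j ≤ d, (σ' ^ j) u = if j = d then u else (σ ^ j) u := by
    intro j hj
    induction j with
    | zero => rw [if_neg (by omega)]; rfl
    | succ j ih =>
      rw [pow_succ', Equiv.Perm.mul_apply, ih (by omega), if_neg (by omega), hσ',
        Equiv.Perm.mul_apply, ← Equiv.Perm.mul_apply σ, ← pow_succ']
      by_cases hstop : j + 1 = d
      · rw [if_pos hstop, hstop, hd1, Equiv.swap_apply_right]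
      · rw [if_neg hstop]
        apply Equiv.swap_apply_of_ne_of_ne
        · intro h
          have h0 : (σ ^ (j+1)) u = (σ ^ 0) u := by simpa using h
          have : j + 1 = 0 := pow_apply_inj σ u (by omega) (by omega) h0
          omega
        · intro h
          rw [← hd1] at h
          exact hstop (pow_apply_inj σ u (by omega) (by omega) h)
  -- iterates of v
  have S2 : ∀ j ≤ p - d, (σ' ^ j) v = if j = p - d then v else (σ ^ (d + j)) u := by
    intro j hj
    induction j with
    | zero => rw [if_neg (by omega)]; simpa using hd1.symm
    | succ j ih =>
      rw [pow_succ', Equiv.Perm.mul_apply, ih (by omega), if_neg (by omega), hσ',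
        Equiv.Perm.mul_apply, ← Equiv.Perm.mul_apply σ, ← pow_succ',
        show d + j + 1 = d + (j + 1) from by omega]
      by_cases hstop : j + 1 = p - d
      · rw [if_pos hstop, show d + (j + 1) = p from by omega, hp, pow_per_apply,
          Equiv.swap_apply_left]
      · rw [if_neg hstop]
        apply Equiv.swap_apply_of_ne_of_ne
        · intro h
          have h0 : (σ ^ (d + (j+1))) u = (σ ^ 0) u := by simpa using h
          have : d + (j + 1) = 0 := pow_apply_inj σ u (by omega) (by omega) h0
          omega
        · intro h
          rw [← hd1] at h
          have := pow_apply_inj σ u (by omega) (by omega) h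
          omega
  have hperu : per σ' u = d := by
    have hret : (σ' ^ d) u = u := by rw [S1 d le_rfl, if_pos rfl]
    have hdvd := per_dvd_of_pow_apply σ' hret
    have hle := Nat.le_of_dvd hdpos hdvd
    rcases eq_or_lt_of_le hle with h | h
    · exact h
    · exfalso
      have hr := pow_per_apply σ' u
      have h2 := S1 (per σ' u) (le_of_lt h)
      rw [if_neg h.ne] at h2
      rw [h2] at hr
      have h0 : (σ ^ per σ' u) u = (σ ^ 0) u := by simpa using hr
      have := pow_apply_inj σ u (by omega) (by omega) h0
      have := per_pos σ' u
      omega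
  have hperv : per σ' v = p - d := by
    have hret : (σ' ^ (p - d)) v = v := by rw [S2 _ le_rfl, if_pos rfl]
    have hdvd := per_dvd_of_pow_apply σ' hret
    have hle := Nat.le_of_dvd (by omega) hdvd
    rcases eq_or_lt_of_le hle with h | h
    · exact h
    · exfalso
      have hr := pow_per_apply σ' v
      have h2 := S2 (per σ' v) (le_of_lt h)
      rw [if_neg h.ne] at h2
      rw [h2] at hr
      have hr2 : (σ ^ (d + per σ' v)) u = (σ ^ d) u := by rw [hd1]; exact hr
      have := pow_apply_inj σ u (by omega) (by omega) hr2
      have := per_pos σ' v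
      omega
  -- the two new orbits partition orb σ u
  have horbu : orb σ' u ⊆ orb σ u := by
    intro z hz
    obtain ⟨j, rfl⟩ := mem_orb_iff.1 hz
    have h1 : (σ' ^ j) u = (σ' ^ (j % per σ' u)) u := (pow_mod_per_apply σ' u j).symm
    have hjlt : j % per σ' u < d := by
      have := Nat.mod_lt j (per_pos σ' u); omega
    have h2 := S1 (j % per σ' u) (le_of_lt hjlt)
    rw [if_neg hjlt.ne] at h2
    rw [h1, h2]
    exact mem_orb_iff.2 ⟨_, rfl⟩
  have horbv : orb σ' v ⊆ orb σ u := by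
    intro z hz
    obtain ⟨j, rfl⟩ := mem_orb_iff.1 hz
    have h1 : (σ' ^ j) v = (σ' ^ (j % per σ' v)) v := (pow_mod_per_apply σ' v j).symm
    have hjlt : j % per σ' v < p - d := by
      have := Nat.mod_lt j (per_pos σ' v); omega
    have h2 := S2 (j % per σ' v) (le_of_lt hjlt)
    rw [if_neg hjlt.ne] at h2
    rw [h1, h2]
    exact mem_orb_iff.2 ⟨_, rfl⟩
  have hcover : orb σ u = orb σ' u ∪ orb σ' v := by
    apply Finset.Subset.antisymm
    · intro z hz
      obtain ⟨j, rfl⟩ := mem_orb_iff.1 hz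
      have h1 : (σ ^ j) u = (σ ^ (j % p)) u := by rw [hp, pow_mod_per_apply]
      have hrlt : j % p < p := Nat.mod_lt _ hppos
      rcases lt_or_ge (j % p) d with h | h
      · apply Finset.mem_union_left
        have h2 := S1 (j % p) (le_of_lt h)
        rw [if_neg h.ne] at h2
        rw [h1, ← h2]
        exact mem_orb_iff.2 ⟨_, rfl⟩
      · apply Finset.mem_union_right
        have h2 := S2 (j % p - d) (by omega)
        rw [if_neg (by omega)] at h2
        rw [h1, show j % p = d + (j % p - d) from by omega, ← h2]
        exact mem_orb_iff.2 ⟨_, rfl⟩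
    · intro z hz
      rcases Finset.mem_union.1 hz with h | h
      · exact horbu h
      · exact horbv h
  have hdisj : _root_.Disjoint (orb σ' u) (orb σ' v) := by
    apply orb_disjoint_of_notmem
    intro hmem
    obtain ⟨j, hj⟩ := mem_orb_iff.1 hmem
    rw [← pow_mod_per_apply] at hj
    have hjlt : j % per σ' u < d := by
      have := Nat.mod_lt j (per_pos σ' u); omega
    have h2 := S1 (j % per σ' u) (le_of_lt hjlt)
    rw [if_neg hjlt.ne] at h2
    rw [h2, ← hd1] at hj
    have := pow_apply_inj σ u (by omega) (by omega) hj
    omega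
  -- sums
  have hrest : ∀ x ∈ (orb σ u)ᶜ, wt σ' x = wt σ x := by
    intro x hx
    rw [Finset.mem_compl] at hx
    have hx2 : x ∉ orb σ v := by rwa [orb_eq_of_mem hs]
    exact wt_swap_mul_of_notmem σ hx hx2
  have hsC' : ∑ x ∈ orb σ u, wt σ' x = ch d + ch (p - d) := by
    rw [hcover, Finset.sum_union hdisj]
    have h1 : ∑ x ∈ orb σ' u, wt σ' x = ch d := by rw [sum_wt_orb, hperu]
    have h2 : ∑ x ∈ orb σ' v, wt σ' x = ch (p - d) := by rw [sum_wt_orb, hperv]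
    rw [h1, h2]
  have hsC : ∑ x ∈ orb σ u, wt σ x = ch p := sum_wt_orb σ u
  have hineq : ch p ≤ ch d + ch (p - d) := by
    calc ch p = ch (d + (p - d)) := by rw [show d + (p - d) = p from by omega]
      _ ≤ ch d + ch (p - d) := ch_add_le _ _
  calc ∑ x, wt σ x = ∑ x ∈ (orb σ u)ᶜ, wt σ x + ∑ x ∈ orb σ u, wt σ x :=
        (Finset.sum_compl_add_sum _ _).symm
    _ ≤ ∑ x ∈ (orb σ u)ᶜ, wt σ x + (ch d + ch (p - d)) := by
        rw [hsC]; linarith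
    _ = ∑ x ∈ (orb σ u)ᶜ, wt σ' x + ∑ x ∈ orb σ u, wt σ' x := by
        rw [Finset.sum_congr rfl hrest, hsC']
    _ = ∑ x, wt σ' x := Finset.sum_compl_add_sum _ _

end Split
section ThreeCycle
variable {σ : Equiv.Perm α}

lemma ch_eq_zero_of_even {t : ℕ} (h : Even t) : ch t = 0 := by
  have : ¬ Odd t := by simpa [Nat.not_odd_iff_even] using h
  simp [ch, this]

lemma sum_wt_swap_le (σ : Equiv.Perm α) {u v : α} (huv : u ≠ v) :
    ∑ x, wt σ x ≤ ∑ x, wt (Equiv.swap u v * σ) x + 2 := by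
  by_cases hs : v ∈ orb σ u
  · linarith [sum_wt_swap_split huv hs]
  · have hm := sum_wt_swap_merge huv hs
    have h1 := ch_nonneg (per σ u + per σ v)
    have h2 := ch_le_one (per σ u)
    have h3 := ch_le_one (per σ v)
    linarith

lemma sum_wt_three_cycle_le (σ : Equiv.Perm α) {a b c : α}
    (hab : a ≠ b) (hbc : b ≠ c) (hac : a ≠ c) :
    ∑ x, wt σ x ≤ ∑ x, wt (Equiv.swap a b * Equiv.swap b c * σ) x + 2 := by
  rw [mul_assoc]
  set σ₁ := Equiv.swap b c * σ with hσ₁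
  by_cases h1 : c ∈ orb σ b
  · calc ∑ x, wt σ x ≤ ∑ x, wt σ₁ x := sum_wt_swap_split hbc h1
      _ ≤ ∑ x, wt (Equiv.swap a b * σ₁) x + 2 := sum_wt_swap_le σ₁ hab
  · have hm := sum_wt_swap_merge hbc h1
    have hpb : per σ₁ b = per σ b + per σ c := per_swap_merge_u hbc h1
    by_cases h2 : Odd (per σ b) ∧ Odd (per σ c)
    · have heven : Even (per σ₁ b) := by rw [hpb]; exact h2.1.add_odd h2.2
      have hch1 : ch (per σ b) = 1 := by simp [ch, h2.1]
      have hch2 : ch (per σ c) = 1 := by simp [ch, h2.2]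
      have hch3 : ch (per σ b + per σ c) = 0 := ch_eq_zero_of_even (by rw [← hpb]; exact heven)
      by_cases h3 : b ∈ orb σ₁ a
      · have := sum_wt_swap_split hab h3
        linarith
      · have hm2 := sum_wt_swap_merge hab h3
        have hchb : ch (per σ₁ b) = 0 := ch_eq_zero_of_even heven
        have hchab : ch (per σ₁ a + per σ₁ b) = ch (per σ₁ a) := ch_add_even heven
        linarith
    · have hD1 : ch (per σ b + per σ c) - ch (per σ b) - ch (per σ c) = 0 := by
        rcases Decidable.not_and_iff_or_not.1 h2 with h | h
        · have he : Even (per σ b) := Nat.not_odd_iff_even.1 h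
          rw [ch_eq_zero_of_even he, show per σ b + per σ c = per σ c + per σ b from by ring,
            ch_add_even he]
          ring
        · have he : Even (per σ c) := Nat.not_odd_iff_even.1 h
          rw [ch_eq_zero_of_even he, ch_add_even he]
          ring
      have := sum_wt_swap_le σ₁ hab
      linarith

lemma conj_pow_apply (g σ : Equiv.Perm α) (k : ℕ) (x : α) :
    ((g * σ * g⁻¹) ^ k) (g x) = g ((σ ^ k) x) := by
  induction k with
  | zero => simp
  | succ k ih =>
    rw [pow_succ', pow_succ', Equiv.Perm.mul_apply, ih, Equiv.Perm.mul_apply,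
      Equiv.Perm.mul_apply, Equiv.Perm.mul_apply, Equiv.Perm.inv_eq_iff_eq.2 rfl]

lemma per_conj (g σ : Equiv.Perm α) (x : α) : per (g * σ * g⁻¹) (g x) = per σ x := by
  apply Nat.dvd_antisymm
  · apply per_dvd_of_pow_apply
    rw [conj_pow_apply, pow_per_apply]
  · apply per_dvd_of_pow_apply
    have h := pow_per_apply (g * σ * g⁻¹) (g x)
    rw [conj_pow_apply] at h
    exact g.injective h

lemma sum_wt_conj (g σ : Equiv.Perm α) : ∑ x, wt (g * σ * g⁻¹) x = ∑ x, wt σ x := by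
  rw [← Equiv.sum_comp g (fun y => wt (g * σ * g⁻¹) y)]
  apply Finset.sum_congr rfl
  intro x _
  rw [wt, wt, per_conj]

end ThreeCycle
end Generic
section ObGR

lemma val_add_one' {n : ℕ} (y : Fin (n + 1)) :
    ((y + 1 : Fin (n + 1)) : ℕ) = ((y : ℕ) + 1) % (n + 1) := by
  rw [Fin.val_add_one]
  split_ifs with h
  · rw [h]; simp [Fin.last]
  · have : (y : ℕ) < n := by
      rcases lt_or_eq_of_le (Nat.lt_succ_iff.1 y.isLt) with h' | h'
      · exact h'
      · exact absurd (Fin.ext h' : y = Fin.last n) h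
    rw [Nat.mod_eq_of_lt (by omega)]

lemma rho_inv_apply {n : ℕ} (p : Fin (n + 1)) : (rho n)⁻¹ p = p - 1 := by
  rw [Equiv.Perm.inv_eq_iff_eq]
  show p = finRotate (n + 1) (p - 1)
  rw [finRotate_succ_apply, sub_add_cancel]

lemma ob_one (n : ℕ) : ob n 1 = 1 := by
  rw [ob]; group

lemma ob_mul (n : ℕ) (σ τ : Equiv.Perm (Fin (n + 1))) :
    ob n (σ * τ) = ob n σ * (σ * ob n τ * σ⁻¹) := by
  rw [ob, ob, ob]; group

lemma ob_gr_eq {n i j l : ℕ} {τ : Equiv.Perm (Fin (n + 1))} (h : IsGRTransposition n i j l τ) :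
    ∃ a b c : Fin (n + 1), a ≠ b ∧ b ≠ c ∧ a ≠ c ∧
      ob n τ = Equiv.swap a b * Equiv.swap b c := by
  obtain ⟨h1, hij, hjl, hl, C1, C2, C3, C4⟩ := h
  have hn : 2 ≤ n := by omega
  have hiN : i < n + 1 := by omega
  have hjN : j < n + 1 := by omega
  set iF : Fin (n + 1) := ⟨i, hiN⟩ with hiFdef
  set jF : Fin (n + 1) := ⟨j, hjN⟩ with hjFdef
  set lF : Fin (n + 1) := ⟨l % (n + 1), Nat.mod_lt _ (by omega)⟩ with hlFdef
  have hlm : l % (n + 1) = if l = n + 1 then 0 else l := by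
    split_ifs with h'
    · simp [h']
    · exact Nat.mod_eq_of_lt (by omega)
  have hlval : (lF : ℕ) = l % (n + 1) := rfl
  have hne1 : jF ≠ iF := Fin.ne_of_val_ne (by show j ≠ i; omega)
  have hne2 : iF ≠ lF := Fin.ne_of_val_ne (by show i ≠ l % (n+1); split at hlm <;> omega)
  have hne3 : jF ≠ lF := Fin.ne_of_val_ne (by show j ≠ l % (n+1); split at hlm <;> omega)
  refine ⟨jF, iF, lF, hne1, hne2, hne3, ?_⟩
  apply Equiv.ext
  intro x
  obtain ⟨p, rfl⟩ := τ.surjective x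
  have hob : (ob n τ) (τ p) = rho n (τ ((rho n)⁻¹ p)) := by
    simp [ob, Equiv.Perm.mul_apply]
  rw [hob, rho_inv_apply, Equiv.Perm.mul_apply]
  set p1 : Fin (n + 1) := p - 1 with hp1def
  have hp1 : (p1 : ℕ) = if p = 0 then n else (p : ℕ) - 1 := Fin.coe_sub_one p
  have hrho : ∀ y : Fin (n + 1), rho n y = y + 1 := finRotate_succ_apply
  have swapfix : ∀ (a b y : Fin (n + 1)), y ≠ a → y ≠ b → Equiv.swap a b y = y :=
    fun a b y ha hb => Equiv.swap_apply_of_ne_of_ne ha hb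
  -- useful val bound
  have hpN : (p : ℕ) ≤ n := Nat.lt_succ_iff.1 p.isLt
  by_cases hq0 : p = 0
  · have hτp : τ p = p := C1 p (by rw [hq0]; show (0:ℕ) < i; omega)
    have hp1v : (p1 : ℕ) = n := by rw [hp1, if_pos hq0]
    by_cases hln : l = n + 1
    · -- τ p = 0 = lF
      have hτpl : τ p = lF := by
        apply Fin.ext
        rw [hτp, hq0, hlval, hlm, if_pos hln]
        rfl
      have hc3 : (τ p1 : ℕ) = i + ((p1 : ℕ) - (i + (l - j))) := C3 p1 (by omega) (by omega)
      have hc3' : (τ p1 : ℕ) = j - 1 := by rw [hc3]; omega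
      rw [hτpl, Equiv.swap_apply_right, Equiv.swap_apply_right, hrho]
      apply Fin.ext
      rw [val_add_one', hc3', Nat.mod_eq_of_lt (by omega)]
      show j - 1 + 1 = j
      omega
    · -- l ≤ n, τ p = 0 not special
      have hτp1 : τ p1 = p1 := C4 p1 (by omega)
      have h0i : τ p ≠ iF := by rw [hτp, hq0]; exact Fin.ne_of_val_ne (by show (0:ℕ) ≠ i; omega)
      have h0j : τ p ≠ jF := by rw [hτp, hq0]; exact Fin.ne_of_val_ne (by show (0:ℕ) ≠ j; omega)
      have h0l : τ p ≠ lF := by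
        rw [hτp, hq0]; exact Fin.ne_of_val_ne (by show (0:ℕ) ≠ l % (n+1); split at hlm <;> omega)
      rw [swapfix _ _ _ h0i h0l, swapfix _ _ _ h0j h0i, hτp1, hrho]
      apply Fin.ext
      rw [val_add_one', hp1v, Nat.mod_self, hτp, hq0]
      rfl
  · have hq1 : 1 ≤ (p : ℕ) := by
      rcases Nat.eq_zero_or_pos (p : ℕ) with h' | h'
      · exact absurd (Fin.ext h' : p = 0) hq0
      · exact h'
    have hp1v : (p1 : ℕ) = (p : ℕ) - 1 := by rw [hp1, if_neg hq0]
    by_cases hA : (p : ℕ) < i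
    · have hτp : τ p = p := C1 p hA
      have hτp1 : τ p1 = p1 := C1 p1 (by omega)
      have hi : τ p ≠ iF := by rw [hτp]; exact Fin.ne_of_val_ne (by show (p:ℕ) ≠ i; omega)
      have hj : τ p ≠ jF := by rw [hτp]; exact Fin.ne_of_val_ne (by show (p:ℕ) ≠ j; omega)
      have hlne : τ p ≠ lF := by
        rw [hτp]; exact Fin.ne_of_val_ne (by show (p:ℕ) ≠ l % (n+1); split at hlm <;> omega)
      rw [swapfix _ _ _ hi hlne, swapfix _ _ _ hj hi, hτp1, hrho, hτp]
      apply Fin.ext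
      rw [val_add_one', hp1v, Nat.mod_eq_of_lt (by omega)]
      omega
    · by_cases hB : (p : ℕ) < i + (l - j)
      · by_cases hBi : (p : ℕ) = i
        · -- τ p = jF
          have hτp : (τ p : ℕ) = j := by
            rw [C2 p (by omega) (by omega)]; omega
          have hτpj : τ p = jF := Fin.ext hτp
          have hτp1 : τ p1 = p1 := C1 p1 (by omega)
          rw [hτpj, swapfix _ _ _ hne1 hne3, Equiv.swap_apply_left, hτp1, hrho]
          apply Fin.ext
          rw [val_add_one', hp1v, Nat.mod_eq_of_lt (by omega)]
          show (p:ℕ) - 1 + 1 = i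
          omega
        · -- i < q < i + (l-j)
          have hτp : (τ p : ℕ) = j + ((p:ℕ) - i) := C2 p (by omega) (by omega)
          have hτp1 : (τ p1 : ℕ) = j + ((p1:ℕ) - i) := C2 p1 (by omega) (by omega)
          have hi : τ p ≠ iF := Fin.ne_of_val_ne (by rw [hτp]; show _ ≠ i; omega)
          have hj : τ p ≠ jF := Fin.ne_of_val_ne (by rw [hτp]; show _ ≠ j; omega)
          have hlne : τ p ≠ lF := Fin.ne_of_val_ne (by
            rw [hτp]; show _ ≠ l % (n+1); split at hlm <;> omega)
          rw [swapfix _ _ _ hi hlne, swapfix _ _ _ hj hi, hrho]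
          apply Fin.ext
          rw [val_add_one', hτp1, hτp, hp1v, Nat.mod_eq_of_lt (by omega)]
          omega
      · by_cases hC : (p : ℕ) < l
        · by_cases hCi : (p : ℕ) = i + (l - j)
          · -- τ p = iF
            have hτp : (τ p : ℕ) = i := by
              rw [C3 p (by omega) (by omega)]; omega
            have hτpi : τ p = iF := Fin.ext hτp
            have hτp1 : (τ p1 : ℕ) = j + ((p1:ℕ) - i) := C2 p1 (by omega) (by omega)
            have hτp1' : (τ p1 : ℕ) = l - 1 := by rw [hτp1]; omega
            rw [hτpi, Equiv.swap_apply_left, swapfix _ _ _ hne3.symm hne2.symm, hrho]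
            apply Fin.ext
            rw [val_add_one', hτp1', hlval]
            have : l - 1 + 1 = l := by omega
            rw [this]
          · -- i + (l-j) < q < l
            have hτp : (τ p : ℕ) = i + ((p:ℕ) - (i + (l - j))) := C3 p (by omega) hC
            have hτp1 : (τ p1 : ℕ) = i + ((p1:ℕ) - (i + (l - j))) := C3 p1 (by omega) (by omega)
            have hi : τ p ≠ iF := Fin.ne_of_val_ne (by rw [hτp]; show _ ≠ i; omega)
            have hj : τ p ≠ jF := Fin.ne_of_val_ne (by rw [hτp]; show _ ≠ j; omega)
            have hlne : τ p ≠ lF := Fin.ne_of_val_ne (by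
              rw [hτp]; show _ ≠ l % (n+1); split at hlm <;> omega)
            rw [swapfix _ _ _ hi hlne, swapfix _ _ _ hj hi, hrho]
            apply Fin.ext
            rw [val_add_one', hτp1, hτp, hp1v, Nat.mod_eq_of_lt (by omega)]
            omega
        · -- l ≤ q (so l ≤ n)
          have hlq : l ≤ (p : ℕ) := by omega
          have hτp : τ p = p := C4 p hlq
          by_cases hDi : (p : ℕ) = l
          · -- τ p = lF
            have hτpl : τ p = lF := by
              apply Fin.ext
              rw [hτp, hlval, hlm, if_neg (by omega)]
              omega
            have hτp1 : (τ p1 : ℕ) = i + ((p1:ℕ) - (i + (l - j))) := C3 p1 (by omega) (by omega)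
            have hτp1' : (τ p1 : ℕ) = j - 1 := by rw [hτp1]; omega
            rw [hτpl, Equiv.swap_apply_right, Equiv.swap_apply_right, hrho]
            apply Fin.ext
            rw [val_add_one', hτp1', Nat.mod_eq_of_lt (by omega)]
            show j - 1 + 1 = j
            omega
          · -- l < q
            have hτp1 : τ p1 = p1 := C4 p1 (by omega)
            have hi : τ p ≠ iF := by rw [hτp]; exact Fin.ne_of_val_ne (by show (p:ℕ) ≠ i; omega)
            have hj : τ p ≠ jF := by rw [hτp]; exact Fin.ne_of_val_ne (by show (p:ℕ) ≠ j; omega)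
            have hlne : τ p ≠ lF := by
              rw [hτp]; exact Fin.ne_of_val_ne (by show (p:ℕ) ≠ l % (n+1); split at hlm <;> omega)
            rw [swapfix _ _ _ hi hlne, swapfix _ _ _ hj hi, hτp1, hrho, hτp]
            apply Fin.ext
            rw [val_add_one', hp1v, Nat.mod_eq_of_lt (by omega)]
            omega
end ObGR
section Generation

lemma adj_isGR (n r : ℕ) (h1 : 1 ≤ r) (h2 : r + 2 ≤ n + 1) (a b : Fin (n + 1))
    (ha : (a : ℕ) = r) (hb : (b : ℕ) = r + 1) :
    IsGRTransposition n r (r + 1) (r + 2) (Equiv.swap a b) := by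
  refine ⟨h1, by omega, by omega, h2, ?_, ?_, ?_, ?_⟩
  · intro p hp
    exact Equiv.swap_apply_of_ne_of_ne (Fin.ne_of_val_ne (by omega))
      (Fin.ne_of_val_ne (by omega))
  · intro p hge hlt
    have hq : (p : ℕ) = r := by omega
    have hpa : p = a := Fin.ext (by omega)
    rw [hpa, Equiv.swap_apply_left]
    omega
  · intro p hge hlt
    have hq : (p : ℕ) = r + 1 := by omega
    have hpb : p = b := Fin.ext (by omega)
    rw [hpb, Equiv.swap_apply_right]
    omega
  · intro p hp
    exact Equiv.swap_apply_of_ne_of_ne (Fin.ne_of_val_ne (by omega))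
      (Fin.ne_of_val_ne (by omega))

/-- measure for the sorting induction -/
noncomputable def mu (n : ℕ) (π : Equiv.Perm (Fin (n + 1))) : ℕ :=
  if h : π.support.Nonempty then
    ((π.support.max' h : Fin (n + 1)) : ℕ) * (n + 2)
      + (((π.support.max' h : Fin (n + 1)) : ℕ) - ((π⁻¹ (π.support.max' h) : Fin (n + 1)) : ℕ))
      + 1
  else 0

lemma gr_gen (n : ℕ) :
    ∀ (k : ℕ) (π : Equiv.Perm (Fin (n + 1))), π 0 = 0 → mu n π ≤ k →
      π ∈ Submonoid.closure {g : Equiv.Perm (Fin (n + 1)) | IsGRTranspositionPerm n g} := by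
  intro k
  induction k with
  | zero =>
    intro π hπ hμ
    by_cases hs : π.support.Nonempty
    · exfalso; rw [mu, dif_pos hs] at hμ; omega
    · rw [Finset.not_nonempty_iff_eq_empty, Equiv.Perm.support_eq_empty_iff] at hs
      rw [hs]; exact one_mem _
  | succ k ih =>
    intro π hπ hμ
    by_cases hs : π.support.Nonempty
    · set M : Fin (n + 1) := π.support.max' hs with hMdef
      have hMmem : M ∈ π.support := Finset.max'_mem _ _
      have hMne : π M ≠ M := Equiv.Perm.mem_support.1 hMmem
      have hMmax : ∀ y ∈ π.support, (y : ℕ) ≤ (M : ℕ) :=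
        fun y hy => Fin.le_def.1 (Finset.le_max' _ y hy)
      have h0 : (0 : Fin (n + 1)) ∉ π.support := by
        rw [Equiv.Perm.mem_support, not_not]; exact hπ
      have hM0 : M ≠ 0 := fun h => h0 (h ▸ hMmem)
      set r : Fin (n + 1) := π⁻¹ M with hrdef
      have hπr : π r = M := Equiv.apply_symm_apply π M
      have hrM : r ≠ M := by
        intro h; rw [h] at hπr; exact hMne hπr
      have hrsupp : r ∈ π.support := by
        rw [Equiv.Perm.mem_support, hπr]; exact fun h => hrM h.symm
      have hr0 : r ≠ 0 := by
        intro h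
        rw [h] at hπr
        exact hM0 (by rw [← hπ, hπr])
      have hrv1 : 1 ≤ (r : ℕ) := by
        rcases Nat.eq_zero_or_pos (r : ℕ) with h | h
        · exact absurd (Fin.ext h : r = 0) hr0
        · exact h
      have hrltM : (r : ℕ) < (M : ℕ) := by
        have := hMmax r hrsupp
        have : (r : ℕ) ≠ (M : ℕ) := fun h => hrM (Fin.ext h)
        omega
      have hMn : (M : ℕ) ≤ n := Nat.lt_succ_iff.1 M.isLt
      set r1 : Fin (n + 1) := ⟨(r : ℕ) + 1, by omega⟩ with hr1def
      set s := Equiv.swap r r1 with hsdef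
      have hr1v : (r1 : ℕ) = (r : ℕ) + 1 := rfl
      have hsGR : IsGRTranspositionPerm n s :=
        ⟨(r : ℕ), (r : ℕ) + 1, (r : ℕ) + 2,
          adj_isGR n (r : ℕ) hrv1 (by omega) r r1 rfl rfl⟩
      have hs0 : s 0 = 0 := Equiv.swap_apply_of_ne_of_ne (Ne.symm hr0)
        (Fin.ne_of_val_ne (by show (0:ℕ) ≠ (r:ℕ) + 1; omega))
      have hπ' : (π * s) 0 = 0 := by rw [Equiv.Perm.mul_apply, hs0, hπ]
      have hss : π = (π * s) * s := by
        rw [mul_assoc, hsdef, Equiv.swap_mul_self, mul_one]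
      -- key: measure decreases
      have hmain : mu n (π * s) < mu n π := by
        have hmuπ : mu n π = (M : ℕ) * (n + 2) + ((M : ℕ) - (r : ℕ)) + 1 := by
          rw [mu, dif_pos hs]
        by_cases hcase : (r : ℕ) + 1 = (M : ℕ)
        · -- r1 = M : after the swap, M is fixed and support stays below M
          have hr1M : r1 = M := Fin.ext hcase
          have hfixM : (π * s) M = M := by
            have hsM : s M = r := by rw [← hr1M, hsdef, Equiv.swap_apply_right]
            rw [Equiv.Perm.mul_apply, hsM, hπr]
          have hsub : ∀ y, y ∈ (π * s).support → (y : ℕ) < (M : ℕ) := by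
            intro y hy
            rw [Equiv.Perm.mem_support] at hy
            rcases lt_or_ge (y : ℕ) (M : ℕ) with h | h
            · exact h
            · exfalso
              have hyr : y ≠ r := fun hh => by rw [hh] at h; omega
              have hyr1 : y ≠ r1 := by
                intro hh
                rw [hh, hr1M] at hy
                exact hy hfixM
              have hsy : s y = y := Equiv.swap_apply_of_ne_of_ne hyr hyr1
              have hyM : y ≠ M := fun hh => hy (by rw [hh, hfixM])
              have hygt : (M : ℕ) < (y : ℕ) := by
                have : (y : ℕ) ≠ (M : ℕ) := fun hh => hyM (Fin.ext hh)
                omega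
              have hysupp : y ∉ π.support := by
                intro hmem
                have := hMmax y hmem
                omega
              rw [Equiv.Perm.mem_support, not_not] at hysupp
              exact hy (by rw [Equiv.Perm.mul_apply, hsy, hysupp])
          by_cases hs' : (π * s).support.Nonempty
          · have hM'lt : (((π * s).support.max' hs' : Fin (n + 1)) : ℕ) < (M : ℕ) :=
              hsub _ (Finset.max'_mem _ _)
            have hM'n : (((π * s).support.max' hs' : Fin (n + 1)) : ℕ) ≤ n :=
              Nat.lt_succ_iff.1 (Fin.isLt _)
            rw [mu, dif_pos hs', hmuπ]
            have hsubval : (((π * s).support.max' hs' : Fin (n + 1)) : ℕ)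
                - (((π * s)⁻¹ ((π * s).support.max' hs') : Fin (n + 1)) : ℕ) ≤ n := by omega
            nlinarith [hM'lt, hsubval, hMn]
          · rw [mu, dif_neg hs', hmuπ]; omega
        · -- r1 ≠ M: M stays the max, position of M moves up
          have hr1MNe : r1 ≠ M := fun hh => hcase (by rw [← hh])
          have hrMne : r ≠ M := hrM
          have hsM : s M = M := Equiv.swap_apply_of_ne_of_ne (Ne.symm hrMne) (Ne.symm hr1MNe)
          have hπ'M : (π * s) M = π M := by rw [Equiv.Perm.mul_apply, hsM]
          have hMsupp' : M ∈ (π * s).support := by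
            rw [Equiv.Perm.mem_support, hπ'M]; exact hMne
          have hs'ne : (π * s).support.Nonempty := ⟨M, hMsupp'⟩
          have hbound : ∀ y ∈ (π * s).support, (y : ℕ) ≤ (M : ℕ) := by
            intro y hy
            rcases le_or_gt (y : ℕ) (M : ℕ) with h | h
            · exact h
            · exfalso
              rw [Equiv.Perm.mem_support] at hy
              have hyr : y ≠ r := fun hh => by rw [hh] at h; omega
              have hyr1 : y ≠ r1 := fun hh => by rw [hh] at h; rw [hr1v] at h; omega
              have hsy : s y = y := Equiv.swap_apply_of_ne_of_ne hyr hyr1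
              have hysupp : y ∉ π.support := fun hmem => by have := hMmax y hmem; omega
              rw [Equiv.Perm.mem_support, not_not] at hysupp
              exact hy (by rw [Equiv.Perm.mul_apply, hsy, hysupp])
          have hmaxeq : (π * s).support.max' hs'ne = M := by
            apply le_antisymm
            · apply Finset.max'_le
              intro y hy
              exact Fin.le_def.2 (hbound y hy)
            · exact Finset.le_max' _ _ hMsupp'
          have hinv : (π * s)⁻¹ M = r1 := by
            rw [Equiv.Perm.inv_eq_iff_eq, Equiv.Perm.mul_apply, hsdef,
              Equiv.swap_apply_right, hπr]
          rw [mu, dif_pos hs'ne, hmaxeq, hinv, hmuπ, hr1v]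
          omega
      have hle : mu n (π * s) ≤ k := by omega
      have hmem := ih (π * s) hπ' hle
      rw [hss]
      exact mul_mem hmem (Submonoid.subset_closure hsGR)
    · rw [Finset.not_nonempty_iff_eq_empty, Equiv.Perm.support_eq_empty_iff] at hs
      rw [hs]; exact one_mem _

lemma exists_gr_list (n : ℕ) (π : Equiv.Perm (Fin (n + 1))) (hπ : π 0 = 0) :
    ∃ L : List (Equiv.Perm (Fin (n + 1))),
      (∀ g ∈ L, IsGRTranspositionPerm n g) ∧ L.prod = π := by
  have hmem := gr_gen n (mu n π) π hπ le_rfl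
  obtain ⟨L, hL, hprod⟩ := Submonoid.exists_list_of_mem_closure hmem
  exact ⟨L, hL, hprod⟩

end Generation
section Main

lemma sum_wt_one (m : ℕ) [NeZero m] :
    ∑ x : Fin m, wt (1 : Equiv.Perm (Fin m)) x = (m : ℚ) := by
  have h1 : ∀ x : Fin m, wt (1 : Equiv.Perm (Fin m)) x = 1 := fun x => wt_eq_one_of_fixed rfl
  rw [Finset.sum_congr rfl (fun x _ => h1 x), Finset.sum_const, Finset.card_univ,
    Fintype.card_fin, nsmul_eq_mul, mul_one]

lemma key_list (n : ℕ) : ∀ L : List (Equiv.Perm (Fin (n + 1))),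
    (∀ g ∈ L, IsGRTranspositionPerm n g) →
    (n + 1 : ℚ) ≤ (∑ x, wt (ob n L.prod) x) + 2 * L.length := by
  intro L
  induction L with
  | nil =>
    intro _
    simp only [List.prod_nil, List.length_nil, Nat.cast_zero, mul_zero, add_zero]
    rw [ob_one, sum_wt_one]
    push_cast
    linarith
  | cons τ L ih =>
    intro hall
    have hτ : IsGRTranspositionPerm n τ := hall τ List.mem_cons_self
    have hL : ∀ g ∈ L, IsGRTranspositionPerm n g := fun g hg => hall g (List.mem_cons_of_mem τ hg)
    obtain ⟨i, j, l, hgr⟩ := hτ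
    obtain ⟨a, b, c, hab, hbc, hac, hob⟩ := ob_gr_eq hgr
    have hconj : ∑ x, wt (ob n (τ :: L).prod) x
        = ∑ x, wt (τ⁻¹ * ob n (τ :: L).prod * (τ⁻¹)⁻¹) x := by
      rw [sum_wt_conj]
    have halg : τ⁻¹ * ob n (τ :: L).prod * (τ⁻¹)⁻¹
        = (τ⁻¹ * ob n τ * τ) * ob n L.prod := by
      rw [List.prod_cons, ob_mul]
      group
    have hswaps : τ⁻¹ * ob n τ * τ
        = Equiv.swap (τ⁻¹ a) (τ⁻¹ b) * Equiv.swap (τ⁻¹ b) (τ⁻¹ c) := by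
      rw [hob, Equiv.swap_apply_apply τ⁻¹ a b, Equiv.swap_apply_apply τ⁻¹ b c]
      group
    have hdist1 : τ⁻¹ a ≠ τ⁻¹ b := fun h => hab (τ⁻¹.injective h)
    have hdist2 : τ⁻¹ b ≠ τ⁻¹ c := fun h => hbc (τ⁻¹.injective h)
    have hdist3 : τ⁻¹ a ≠ τ⁻¹ c := fun h => hac (τ⁻¹.injective h)
    have htri := sum_wt_three_cycle_le (ob n L.prod) hdist1 hdist2 hdist3
    have hih := ih hL
    have hlen : ((τ :: L).length : ℚ) = L.length + 1 := by
      rw [List.length_cons]; push_cast; ring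
    rw [hconj, halg, hswaps, hlen]
    rw [mul_assoc] at htri ⊢
    linarith


/-- for every permutation π of {1,…,n} (extended to {0,…,n} by fixing 0),
td(π) ≥ (n + 1 − c_odd(overline(π))) / 2. -/
theorem td_lower_bound (n : ℕ) (π : Equiv.Perm (Fin (n + 1))) (hπ : π 0 = 0) :
    ((n : ℚ) + 1 - oddCycleCount (ob n π)) / 2 ≤ (td n π : ℚ) := by


  obtain ⟨L0, hL0, hprod0⟩ := exists_gr_list n π hπ
  have hne : {t | ∃ L : List (Equiv.Perm (Fin (n + 1))), L.length = t ∧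
      (∀ g ∈ L, IsGRTranspositionPerm n g) ∧ L.prod = π}.Nonempty :=
    ⟨L0.length, L0, rfl, hL0, hprod0⟩
  have hmem := Nat.sInf_mem hne
  obtain ⟨L, hlen, hgr, hprod⟩ := hmem
  have hkey := key_list n L hgr
  rw [hprod] at hkey
  have hbridge : ∑ x, wt (ob n π) x = (oddCycleCount (ob n π) : ℚ) := by
    rw [sum_wt_eq_oddC]
    rfl
  rw [hbridge] at hkey
  have hlen' : (L.length : ℚ) = (td n π : ℚ) := by rw [hlen]; rfl
  rw [hlen'] at hkey
  linarith

end Main
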